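/- Assume there exists a [δ]^{<θ}-normal ideal on P_κ(λ). Then for every A ∈ (NS^{[δ]^{<θ}}_{κ,λ})⁺, cof(NS^{[δ]^{<θ}}_{κ,λ} | A) = 𝔡^{|P_θ̄(δ)|}_{κ,λ}. -/

import Mathlib

open Cardinal Set

namespace PklNormal

/-- `P_κ(l)`: the collection of subsets of (the set of ordinals below) `l`
of cardinality `< κ`. -/
def PSet (κ : Cardinal.{0}) (l : Ordinal.{0}) : Set (Set Ordinal.{0}) :=
  {a | a ⊆ Set.Iio l ∧ #↥a < Cardinal.lift.{1} κ}

/-- `e ∈ P_{|a ∩ σ|}(a ∩ γ)`. -/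
def inP (σ : Cardinal.{0}) (γ : Ordinal.{0}) (a e : Set Ordinal.{0}) : Prop :=
  e ⊆ a ∩ Set.Iio γ ∧ #↥e < #↥(a ∩ Set.Iio σ.ord)

/-- The collection `I_{κ,l}` of non-cofinal subsets of `P_κ(l)`. -/
def Ikl (κ : Cardinal.{0}) (l : Ordinal.{0}) : Set (Set (Set Ordinal.{0})) :=
  {B | B ⊆ PSet κ l ∧ ∃ a ∈ PSet κ l, ∀ b ∈ B, ¬ a ⊆ b}

/-- An ideal on `P_κ(l)`. -/
structure IsIdeal (κ : Cardinal.{0}) (l : Ordinal.{0})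
    (K : Set (Set (Set Ordinal.{0}))) : Prop where
  mem_subset : ∀ B ∈ K, B ⊆ PSet κ l
  subset_mem : ∀ B ∈ K, ∀ C ⊆ B, C ∈ K
  sUnion_mem : ∀ Y ⊆ K, Y.Nonempty → #↥Y < Cardinal.lift.{1} κ → ⋃₀ Y ∈ K
  nonCofinal_subset : Ikl κ l ⊆ K
  univ_not_mem : PSet κ l ∉ K

/-- `K⁺`: the subsets of `P_κ(l)` not in `K`. -/
def plus (κ : Cardinal.{0}) (l : Ordinal.{0}) (K : Set (Set (Set Ordinal.{0}))) :
    Set (Set (Set Ordinal.{0})) :=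
  {B | B ⊆ PSet κ l ∧ B ∉ K}

/-- `K*`: the subsets of `P_κ(l)` whose complement is in `K`. -/
def star (κ : Cardinal.{0}) (l : Ordinal.{0}) (K : Set (Set (Set Ordinal.{0}))) :
    Set (Set (Set Ordinal.{0})) :=
  {B | B ⊆ PSet κ l ∧ PSet κ l \ B ∈ K}

/-- `K|A`. -/
def restrict (κ : Cardinal.{0}) (l : Ordinal.{0}) (K : Set (Set (Set Ordinal.{0})))
    (A : Set (Set Ordinal.{0})) : Set (Set (Set Ordinal.{0})) :=
  {B | B ⊆ PSet κ l ∧ B ∩ A ∈ K}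

/-- `∇^{[γ]^{<σ}} J`. -/
def nabla (κ : Cardinal.{0}) (l : Ordinal.{0}) (σ : Cardinal.{0}) (γ : Ordinal.{0})
    (J : Set (Set (Set Ordinal.{0}))) : Set (Set (Set Ordinal.{0})) :=
  {B | ∃ F : Set Ordinal.{0} → Set (Set Ordinal.{0}),
    (∀ e ∈ PSet σ γ, F e ∈ J) ∧
    B ⊆ {a | a ∈ PSet κ l ∧ a ∩ Set.Iio σ.ord = ∅} ∪
      ⋃ e ∈ PSet σ γ, {a | a ∈ F e ∧ inP σ γ a e}}

/-- `J` is `[γ]^{<σ}`-normal. -/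
def IsNormal (κ : Cardinal.{0}) (l : Ordinal.{0}) (σ : Cardinal.{0}) (γ : Ordinal.{0})
    (J : Set (Set (Set Ordinal.{0}))) : Prop :=
  J = nabla κ l σ γ J

def IsNormalIdeal (κ : Cardinal.{0}) (l : Ordinal.{0}) (σ : Cardinal.{0}) (γ : Ordinal.{0})
    (J : Set (Set (Set Ordinal.{0}))) : Prop :=
  IsIdeal κ l J ∧ IsNormal κ l σ γ J

/-- `N` is the smallest `[γ]^{<σ}`-normal ideal on `P_κ(l)`. -/
def IsLeastNormalIdeal (κ : Cardinal.{0}) (l : Ordinal.{0}) (σ : Cardinal.{0}) (γ : Ordinal.{0})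
    (N : Set (Set (Set Ordinal.{0}))) : Prop :=
  IsNormalIdeal κ l σ γ N ∧ ∀ J, IsNormalIdeal κ l σ γ J → N ⊆ J

/-- `∇^δ K`, the ordinal-indexed diagonal union. -/
def nablaOrd (κ : Cardinal.{0}) (l : Ordinal.{0}) (δ : Ordinal.{0})
    (K : Set (Set (Set Ordinal.{0}))) : Set (Set (Set Ordinal.{0})) :=
  {B | ∃ F : Ordinal.{0} → Set (Set Ordinal.{0}),
    (∀ α < δ, F α ∈ K) ∧
    B ⊆ {a | a ∈ PSet κ l ∧ (0 : Ordinal) ∉ a} ∪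
      ⋃ α ∈ Set.Iio δ, {a | a ∈ F α ∧ α ∈ a}}

/-- `J` is `δ`-normal. -/
def IsOrdNormal (κ : Cardinal.{0}) (l : Ordinal.{0}) (δ : Ordinal.{0})
    (J : Set (Set (Set Ordinal.{0}))) : Prop :=
  J = nablaOrd κ l δ J

/-- `θ̄`: equals `θ` if `θ < κ`, or if `θ = κ` and `κ` is a limit cardinal;
equals `ν` if `θ = κ = ν⁺`. -/
noncomputable def thetaBar (κ θ : Cardinal.{0}) : Cardinal.{0} :=
  haveI := Classical.propDecidable (θ < κ ∨ Order.IsSuccLimit κ)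
  if θ < κ ∨ Order.IsSuccLimit κ then θ else sSup {ν | Order.succ ν = κ}

/-- `cof(K)`: the least number of generators of `K`. -/
noncomputable def cofIdeal (K : Set (Set (Set Ordinal.{0}))) : Cardinal.{1} :=
  sInf {c | ∃ S ⊆ K, #↥S = c ∧ ∀ B ∈ K, ∃ C ∈ S, B ⊆ C}

/-- The dominating number `𝔡^μ_{κ,l}`. -/
noncomputable def dNum (κ : Cardinal.{0}) (l : Ordinal.{0}) (μ : Cardinal.{1}) : Cardinal.{1} :=
  sInf {c | ∃ F : Set (μ.ord.ToType → Set Ordinal.{0}),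
    #↥F = c ∧ (∀ f ∈ F, ∀ i, f i ∈ PSet κ l) ∧
    ∀ g : μ.ord.ToType → Set Ordinal.{0}, (∀ i, g i ∈ PSet κ l) →
      ∃ f ∈ F, ∀ i, g i ⊆ f i}

/-- `u(ρ,μ)`: the least cardinality of a cofinal subset of `(P_ρ(μ), ⊆)`. -/
noncomputable def uNum (ρ μ : Cardinal.{0}) : Cardinal.{1} :=
  sInf {c | ∃ X ⊆ PSet ρ μ.ord, #↥X = c ∧ ∀ e ∈ PSet ρ μ.ord, ∃ x ∈ X, e ⊆ x}

/-- `cov(lam, ν, ν, 2)`: the least cardinality of an `X ⊆ P_ν(lam)` such that every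
member of `P_ν(lam)` is contained in a member of `X`. -/
noncomputable def covNum (lam ν : Cardinal.{0}) : Cardinal.{1} :=
  sInf {c | ∃ X ⊆ PSet ν lam.ord, #↥X = c ∧ ∀ e ∈ PSet ν lam.ord, ∃ x ∈ X, e ⊆ x}

/-- `C` is closed unbounded in `l`. -/
def IsClubIn (C : Set Ordinal.{0}) (l : Ordinal.{0}) : Prop :=
  C ⊆ Set.Iio l ∧ (∀ p < l, ∃ q ∈ C, p < q) ∧
    (∀ o < l, Order.IsSuccLimit o → (∀ p < o, ∃ q ∈ C, p < q ∧ q < o) → o ∈ C)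

/-- `κ` is a Mahlo cardinal: the set of regular cardinals below `κ` is stationary in `κ`. -/
def IsMahlo (κ : Cardinal.{0}) : Prop :=
  ∀ C : Set Ordinal.{0}, IsClubIn C κ.ord →
    ∃ o ∈ C, ∃ ρ : Cardinal.{0}, ρ.IsRegular ∧ ρ.ord = o

-- AUX chunk 1: basic lemmas

lemma PSet_mono {σ σ' : Cardinal.{0}} {γ : Ordinal.{0}} (h : σ ≤ σ') :
    PSet σ γ ⊆ PSet σ' γ := fun _ ha => ⟨ha.1, ha.2.trans_le (Cardinal.lift_le.2 h)⟩

lemma empty_mem_PSet {σ : Cardinal.{0}} {γ : Ordinal.{0}} (h : 0 < σ) :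
    (∅ : Set Ordinal.{0}) ∈ PSet σ γ := by
  refine ⟨Set.empty_subset _, ?_⟩
  have := Cardinal.lift_lt.{0,1}.2 h
  simpa using this

lemma two_le_imp_pos {θ : Cardinal.{0}} (h : 2 ≤ θ) : 0 < θ :=
  lt_of_lt_of_le (by norm_num) h

section TB
variable {κ θ : Cardinal.{0}}

lemma tb_cases (hκ : κ.IsRegular) (hθκ : θ ≤ κ) :
    (thetaBar κ θ = θ ∧ (θ < κ ∨ Order.IsSuccLimit κ)) ∨
      (∃ ν, ℵ₀ ≤ ν ∧ κ = Order.succ ν ∧ θ = κ ∧ thetaBar κ θ = ν) := by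
  unfold thetaBar
  split_ifs with h
  · exact Or.inl ⟨rfl, h⟩
  · push_neg at h
    obtain ⟨h1, h2⟩ := h
    have hθ : θ = κ := le_antisymm hθκ h1
    have hmin : ¬ IsMin κ := by
      intro hm
      have h0 : κ ≤ 0 := hm zero_le
      have := hκ.aleph0_le.trans h0
      simp at this
      exact absurd this Cardinal.aleph0_ne_zero
    have hpre : ¬ Order.IsSuccPrelimit κ := by
      intro hp
      exact h2 ⟨hmin, hp⟩
    obtain ⟨ν, _, hν⟩ := Order.not_isSuccPrelimit_iff_succ_eq.1 hpre
    have hset : {ν' | Order.succ ν' = κ} = {ν} := by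
      ext y
      simp only [Set.mem_setOf_eq, Set.mem_singleton_iff]
      constructor
      · intro hy
        rcases lt_trichotomy y ν with h' | h' | h'
        · have : Order.succ y ≤ ν := Order.succ_le_of_lt h'
          have : Order.succ y < κ := this.trans_lt (hν ▸ Order.lt_succ_of_not_isMax (not_isMax ν))
          exact absurd hy this.ne
        · exact h'
        · have : Order.succ ν ≤ y := Order.succ_le_of_lt h'
          have : κ < Order.succ y := (hν ▸ this).trans_lt (Order.lt_succ_of_not_isMax (not_isMax y))
          exact absurd hy this.ne'
      · rintro rfl; exact hν
    have hν0 : ℵ₀ ≤ ν := by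
      by_contra hlt
      push_neg at hlt
      have hsl : Order.succ ν < ℵ₀ := by
        rw [Cardinal.lt_aleph0] at hlt ⊢
        obtain ⟨n, rfl⟩ := hlt
        exact ⟨n + 1, by simp [Cardinal.succ_natCast]⟩
      rw [hν] at hsl
      exact absurd hsl (not_lt.2 hκ.aleph0_le)
    exact Or.inr ⟨ν, hν0, hν.symm, hθ, by rw [hset, csSup_singleton]⟩

lemma tb_le (hκ : κ.IsRegular) (hθκ : θ ≤ κ) : thetaBar κ θ ≤ θ := by
  rcases tb_cases hκ hθκ with ⟨h, _⟩ | ⟨ν, _, hκν, hθ, h⟩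
  · exact h.le
  · rw [h, hθ, hκν]; exact (Order.le_succ ν)

lemma tb_pos (hκ : κ.IsRegular) (hθ2 : 2 ≤ θ) (hθκ : θ ≤ κ) : 0 < thetaBar κ θ := by
  rcases tb_cases hκ hθκ with ⟨h, _⟩ | ⟨ν, hν0, _, _, h⟩
  · rw [h]; exact two_le_imp_pos hθ2
  · rw [h]; exact lt_of_lt_of_le Cardinal.aleph0_pos hν0

lemma tb_succ_le (hκ : κ.IsRegular) (hθκ : θ ≤ κ) {c : Cardinal.{0}}
    (hc : c < thetaBar κ θ) : Order.succ c ≤ θ := by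
  rcases tb_cases hκ hθκ with ⟨h, _⟩ | ⟨ν, _, hκν, hθ, h⟩
  · exact Order.succ_le_of_lt (h ▸ hc)
  · rw [hθ, hκν]
    exact (Order.succ_le_of_lt (h ▸ hc)).trans (Order.le_succ ν)

lemma tb_succ_lt (hκ : κ.IsRegular) (hθκ : θ ≤ κ) {c : Cardinal.{0}}
    (hc : c < thetaBar κ θ) : Order.succ c < κ := by
  rcases tb_cases hκ hθκ with ⟨h, hlim⟩ | ⟨ν, _, hκν, _, h⟩
  · rcases hlim with hlt | hlim
    · exact lt_of_le_of_lt (Order.succ_le_of_lt (h ▸ hc)) hlt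
    · exact hlim.succ_lt ((h ▸ hc).trans_le hθκ)
  · exact lt_of_le_of_lt (Order.succ_le_of_lt (h ▸ hc)) (hκν ▸ Order.lt_succ_of_not_isMax (not_isMax ν))

end TB
-- AUX chunk 2

lemma mk_Iio_ord (c : Cardinal.{0}) : #↥(Set.Iio c.ord) = Cardinal.lift.{1} c := by
  rw [Ordinal.mk_Iio_ordinal, Cardinal.card_ord]

/-- Key fact: if `inP θ δ a e` and `a ∈ P_κ(λ)` then `e ∈ P_θ̄(δ)`. -/
lemma inP_mem_tb {κ lam θ : Cardinal.{0}} {δ : Ordinal.{0}}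
    (hκ : κ.IsRegular) (hθκ : θ ≤ κ)
    {a e : Set Ordinal.{0}} (ha : a ∈ PSet κ lam.ord) (h : inP θ δ a e) :
    e ∈ PSet (thetaBar κ θ) δ := by
  refine ⟨h.1.trans (Set.inter_subset_right), ?_⟩
  rcases tb_cases hκ hθκ with ⟨htb, _⟩ | ⟨ν, _, hκν, hθ, htb⟩
  · rw [htb]
    calc #↥e < #↥(a ∩ Set.Iio θ.ord) := h.2
      _ ≤ #↥(Set.Iio θ.ord) := Cardinal.mk_le_mk_of_subset Set.inter_subset_right
      _ = Cardinal.lift.{1} θ := mk_Iio_ord θ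
  · rw [htb]
    have h1 : #↥(a ∩ Set.Iio θ.ord) < Cardinal.lift.{1} κ :=
      lt_of_le_of_lt (Cardinal.mk_le_mk_of_subset Set.inter_subset_left) ha.2
    have h2 : Cardinal.lift.{1} κ = Order.succ (Cardinal.lift.{1} ν) := by
      rw [hκν, Cardinal.lift_succ]
    have h3 : #↥(a ∩ Set.Iio θ.ord) ≤ Cardinal.lift.{1} ν := by
      rw [h2] at h1
      exact Order.lt_succ_iff_of_not_isMax (not_isMax _) |>.1 h1
    exact lt_of_lt_of_le h.2 h3

lemma inP_mem_theta {κ lam θ : Cardinal.{0}} {δ : Ordinal.{0}}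
    (hκ : κ.IsRegular) (hθκ : θ ≤ κ)
    {a e : Set Ordinal.{0}} (ha : a ∈ PSet κ lam.ord) (h : inP θ δ a e) :
    e ∈ PSet θ δ :=
  PSet_mono (tb_le hκ hθκ) (inP_mem_tb hκ hθκ ha h)

lemma lift_isRegular {κ : Cardinal.{0}} (hκ : κ.IsRegular) :
    (Cardinal.lift.{1} κ).IsRegular := by
  constructor
  · exact Cardinal.aleph0_le_lift.2 hκ.aleph0_le
  · rw [← Cardinal.lift_ord, ← Ordinal.lift_cof]
    exact Cardinal.lift_le.2 hκ.2

/-- union of a small family of members of `P_κ(λ)` is in `P_κ(λ)`. -/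
lemma union_small {κ : Cardinal.{0}} {lam : Cardinal.{0}}
    (hκ : κ.IsRegular) {ι : Type 1} (hι : #ι < Cardinal.lift.{1} κ)
    {f : ι → Set Ordinal.{0}} (hf : ∀ i, f i ∈ PSet κ lam.ord) :
    (⋃ i, f i) ∈ PSet κ lam.ord := by
  constructor
  · exact Set.iUnion_subset fun i => (hf i).1
  · calc #↥(⋃ i, f i) ≤ Cardinal.sum (fun i => #↥(f i)) := Cardinal.mk_iUnion_le_sum_mk
      _ < Cardinal.lift.{1} κ :=
        Cardinal.sum_lt_of_isRegular (lift_isRegular hκ) hι (fun i => (hf i).2)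

section IdealLemmas
variable {κ lam : Cardinal.{0}} {N : Set (Set (Set Ordinal.{0}))}

lemma union2_mem (hκ : κ.IsRegular) (hI : IsIdeal κ lam.ord N)
    {B₁ B₂ : Set (Set Ordinal.{0})} (h1 : B₁ ∈ N) (h2 : B₂ ∈ N) : B₁ ∪ B₂ ∈ N := by
  have : B₁ ∪ B₂ = ⋃₀ {B₁, B₂} := by simp
  rw [this]
  apply hI.sUnion_mem _ (by intro x hx; rcases hx with rfl | rfl; exacts [h1, h2])
    ⟨B₁, by simp⟩
  calc #↥({B₁, B₂} : Set (Set (Set Ordinal.{0}))) ≤ 1 + 1 := by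
        simpa using Cardinal.mk_insert_le (s := ({B₂} : Set (Set (Set Ordinal.{0})))) (a := B₁)
    _ < ℵ₀ := by
        have h2 : ((2:ℕ) : Cardinal.{1}) < ℵ₀ := Cardinal.nat_lt_aleph0 2
        have : (1 + 1 : Cardinal.{1}) = ((2:ℕ) : Cardinal.{1}) := by norm_num
        rw [this]
        exact h2
    _ ≤ Cardinal.lift.{1} κ := Cardinal.aleph0_le_lift.2 hκ.aleph0_le

lemma subset_union2_mem (hκ : κ.IsRegular) (hI : IsIdeal κ lam.ord N)
    {B₁ B₂ C : Set (Set Ordinal.{0})} (h1 : B₁ ∈ N) (h2 : B₂ ∈ N)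
    (hC : C ⊆ B₁ ∪ B₂) : C ∈ N :=
  hI.subset_mem _ (union2_mem hκ hI h1 h2) _ hC


lemma compl_hat_mem (hI : IsIdeal κ lam.ord N) {b : Set Ordinal.{0}}
    (hb : b ∈ PSet κ lam.ord) : {a | a ∈ PSet κ lam.ord ∧ ¬ b ⊆ a} ∈ N := by
  apply hI.nonCofinal_subset
  exact ⟨fun a ha => ha.1, b, hb, fun a ha => ha.2⟩

lemma emptyset_mem (hκ : κ.IsRegular) (hI : IsIdeal κ lam.ord N) :
    (∅ : Set (Set Ordinal.{0})) ∈ N := by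
  apply hI.nonCofinal_subset
  exact ⟨Set.empty_subset _, ∅, empty_mem_PSet (lt_of_lt_of_le Cardinal.aleph0_pos hκ.aleph0_le),
    by simp⟩

end IdealLemmas
-- AUX chunk 3 : decreasing lists machinery

/-- the fixed well-ordering on `Set Ordinal.{0}`. -/
def wr : Set Ordinal.{0} → Set Ordinal.{0} → Prop := WellOrderingRel

/-- strictly `wr`-decreasing lists. -/
def Dec (l : List (Set Ordinal.{0})) : Prop := List.Chain' (fun x y => wr y x) l

instance wr_iwo : IsWellOrder (Set Ordinal.{0}) wr := WellOrderingRel.isWellOrder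

instance swap_wr_trans : IsTrans (Set Ordinal.{0}) (fun x y => wr y x) :=
  ⟨fun _ _ _ h1 h2 => Trans.trans h2 h1⟩

instance swap_wr_irrefl : IsIrrefl (Set Ordinal.{0}) (fun x y => wr y x) :=
  ⟨fun a h => irrefl (r := wr) a h⟩

lemma dec_nil : Dec [] := List.isChain_nil

lemma dec_single (e : Set Ordinal.{0}) : Dec [e] := List.isChain_singleton e

lemma Dec.of_append_left {p s : List (Set Ordinal.{0})} (h : Dec (p ++ s)) : Dec p :=
  (List.isChain_append.1 h).1

lemma Dec.of_cons {e : Set Ordinal.{0}} {s : List (Set Ordinal.{0})}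
    (h : Dec (e :: s)) : Dec s := h.tail

/-- insertion into a decreasing list. -/
lemma dec_insert (e : Set Ordinal.{0}) :
    ∀ l : List (Set Ordinal.{0}), Dec l →
      ∃ c, Dec c ∧ l.Sublist c ∧ e ∈ c ∧ ∀ x ∈ c, x ∈ l ∨ x = e := by
  intro l
  induction l with
  | nil =>
    intro _
    exact ⟨[e], dec_single e, List.nil_sublist _, by simp, by simp⟩
  | cons x xs ih =>
    intro hl
    rcases trichotomous_of wr e x with hex | heq | hxe
    · -- e below x : insert into tail
      obtain ⟨c', hc', hsub, hmem, hall⟩ := ih hl.of_cons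
      refine ⟨x :: c', ?_, hsub.cons₂ x, List.mem_cons_of_mem x hmem, ?_⟩
      · rw [Dec, List.Chain', List.isChain_cons]
        refine ⟨?_, hc'⟩
        intro y hy
        have hy' := List.mem_of_mem_head? hy
        rcases hall y hy' with hyx | rfl
        · have hp : List.Pairwise (fun a b => wr b a) (x :: xs) :=
            List.isChain_iff_pairwise.1 hl
          exact List.rel_of_pairwise_cons hp hyx
        · exact hex
      · intro y hy
        rcases List.mem_cons.1 hy with h' | hy'
        · exact Or.inl (by simp [h'])
        · rcases hall y hy' with h' | h'
          · exact Or.inl (List.mem_cons_of_mem x h')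
          · exact Or.inr h'
    · -- e = x
      exact ⟨x :: xs, hl, List.Sublist.refl _, by simp [heq], fun y hy => Or.inl hy⟩
    · -- x below e : put e in front
      refine ⟨e :: x :: xs, ?_, (List.Sublist.refl _).cons e, by simp, ?_⟩
      · rw [Dec, List.Chain', List.isChain_cons_cons]
        exact ⟨hxe, hl⟩
      · intro y hy
        rcases List.mem_cons.1 hy with h' | hy'
        · exact Or.inr h'
        · exact Or.inl hy'

lemma dec_nodup {l : List (Set Ordinal.{0})} (h : Dec l) : l.Nodup := by
  have hp : List.Pairwise (fun a b => wr b a) l := List.isChain_iff_pairwise.1 h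
  exact hp.imp (fun {a b} hab => (ne_of_irrefl (r := wr) hab).symm)
-- AUX chunk 4 : D and C sets

def Guards (θ : Cardinal.{0}) (δ : Ordinal.{0}) (a : Set Ordinal.{0})
    (l : List (Set Ordinal.{0})) : Prop :=
  ∀ e ∈ l, inP θ δ a e

def Dset (κ lam θ : Cardinal.{0}) (δ : Ordinal.{0})
    (h : List (Set Ordinal.{0}) → Set Ordinal.{0}) : Set (Set Ordinal.{0}) :=
  {a | a ∈ PSet κ lam.ord ∧ ∀ l, Dec l → Guards θ δ a l → h l ⊆ a}

def Cset (κ lam θ : Cardinal.{0}) (δ : Ordinal.{0})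
    (h : List (Set Ordinal.{0}) → Set Ordinal.{0}) (p : List (Set Ordinal.{0})) :
    Set (Set Ordinal.{0}) :=
  {a | a ∈ PSet κ lam.ord ∧ ∃ s, Dec (p ++ s) ∧ Guards θ δ a s ∧ ¬ h (p ++ s) ⊆ a}

section DC

variable {κ lam θ : Cardinal.{0}} {δ : Ordinal.{0}} {N : Set (Set (Set Ordinal.{0}))}
  {h : List (Set Ordinal.{0}) → Set Ordinal.{0}}

lemma mem_N_of_nabla (hnor : N = nabla κ lam.ord θ δ N) {B : Set (Set Ordinal.{0})}
    (F : Set Ordinal.{0} → Set (Set Ordinal.{0}))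
    (hF : ∀ e ∈ PSet θ δ, F e ∈ N)
    (hB : B ⊆ {a | a ∈ PSet κ lam.ord ∧ a ∩ Set.Iio θ.ord = ∅} ∪
      ⋃ e ∈ PSet θ δ, {a | a ∈ F e ∧ inP θ δ a e}) :
    B ∈ N := by
  rw [hnor]
  exact ⟨F, hF, hB⟩

lemma firstclause_mem (hκ : κ.IsRegular) (hI : IsIdeal κ lam.ord N)
    (hnor : N = nabla κ lam.ord θ δ N) :
    {a | a ∈ PSet κ lam.ord ∧ a ∩ Set.Iio θ.ord = ∅} ∈ N :=
  mem_N_of_nabla hnor (fun _ => ∅) (fun _ _ => emptyset_mem hκ hI) Set.subset_union_left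

lemma Cset_step (hκ : κ.IsRegular) (hθκ : θ ≤ κ) (hI : IsIdeal κ lam.ord N)
    (hnor : N = nabla κ lam.ord θ δ N)
    (hh : ∀ l, h l ∈ PSet κ lam.ord) (p : List (Set Ordinal.{0}))
    (hind : ∀ e', Dec (p ++ [e']) → Cset κ lam θ δ h (p ++ [e']) ∈ N) :
    Cset κ lam θ δ h p ∈ N := by
  have hX₁ : {a | a ∈ PSet κ lam.ord ∧ ¬ h p ⊆ a} ∈ N := compl_hat_mem hI (hh p)
  set F : Set Ordinal.{0} → Set (Set Ordinal.{0}) :=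
    fun e => Cset κ lam θ δ h (p ++ [e]) with hFdef
  have hF : ∀ e ∈ PSet θ δ, F e ∈ N := by
    intro e _
    by_cases hd : Dec (p ++ [e])
    · exact hind e hd
    · have hFe : F e = ∅ := by
        ext a
        simp only [hFdef, Cset, Set.mem_setOf_eq, Set.mem_empty_iff_false, iff_false, not_and]
        rintro - ⟨s, hdec, -, -⟩
        exact hd hdec.of_append_left
      rw [hFe]
      exact emptyset_mem hκ hI
  have hX₂ : (⋃ e ∈ PSet θ δ, {a | a ∈ F e ∧ inP θ δ a e}) ∈ N :=
    mem_N_of_nabla hnor F hF Set.subset_union_right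
  apply subset_union2_mem hκ hI hX₁ hX₂
  rintro a ⟨haP, s, hdec, hG, hns⟩
  cases s with
  | nil =>
    left
    exact ⟨haP, by simpa using hns⟩
  | cons e s' =>
    right
    have hiP : inP θ δ a e := hG e (List.mem_cons_self)
    have he : e ∈ PSet θ δ := inP_mem_theta hκ hθκ haP hiP
    refine Set.mem_biUnion he ?_
    refine ⟨?_, hiP⟩
    refine ⟨haP, s', ?_, ?_, ?_⟩
    · rw [← List.append_cons]
      exact hdec
    · exact fun e' he' => hG e' (List.mem_cons_of_mem e he')
    · rw [← List.append_cons]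
      exact hns

lemma Cset_mem_all (hκ : κ.IsRegular) (hθκ : θ ≤ κ) (hI : IsIdeal κ lam.ord N)
    (hnor : N = nabla κ lam.ord θ δ N)
    (hh : ∀ l, h l ∈ PSet κ lam.ord) :
    ∀ e p, Dec p → p.getLast? = some e → Cset κ lam θ δ h p ∈ N := by
  have wf : WellFounded wr := (wr_iwo.toIsWellFounded).wf
  intro e
  induction e using wf.induction with
  | _ e IH =>
    intro p _ hlast
    apply Cset_step hκ hθκ hI hnor hh p
    intro e' hd
    have hrel : wr e' e := by
      have h3 := (List.isChain_append.1 hd).2.2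
      have := h3 e (by rw [hlast]; rfl) e' rfl
      exact this
    exact IH e' hrel (p ++ [e']) hd List.getLast?_concat

lemma Dset_compl_mem (hκ : κ.IsRegular) (hθκ : θ ≤ κ) (hI : IsIdeal κ lam.ord N)
    (hnor : N = nabla κ lam.ord θ δ N)
    (hh : ∀ l, h l ∈ PSet κ lam.ord) :
    PSet κ lam.ord \ Dset κ lam θ δ h ∈ N := by
  have h0 : Cset κ lam θ δ h [] ∈ N := by
    apply Cset_step hκ hθκ hI hnor hh []
    intro e' hd
    exact Cset_mem_all hκ hθκ hI hnor hh e' [e'] (by simpa using hd) (by simp)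
  apply hI.subset_mem _ h0
  rintro a ⟨haP, hnd⟩
  simp only [Dset, Set.mem_setOf_eq, not_and, not_forall] at hnd
  obtain ⟨l, hdec, hG, hns⟩ := hnd haP
  exact ⟨haP, l, by simpa using hdec, hG, by simpa using hns⟩

end DC
-- AUX chunk 5 : the one-step collection K and its normality

def Kcol (κ lam θ : Cardinal.{0}) (δ : Ordinal.{0}) : Set (Set (Set Ordinal.{0})) :=
  {B | B ⊆ PSet κ lam.ord ∧ ∃ h : List (Set Ordinal.{0}) → Set Ordinal.{0},
    (∀ l, h l ∈ PSet κ lam.ord) ∧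
    B ⊆ {a | a ∈ PSet κ lam.ord ∧ a ∩ Set.Iio θ.ord = ∅} ∪
      (PSet κ lam.ord \ Dset κ lam θ δ h)}

section K

variable {κ lam θ : Cardinal.{0}} {δ : Ordinal.{0}} {N : Set (Set (Set Ordinal.{0}))}

lemma Dset_anti {h h' : List (Set Ordinal.{0}) → Set Ordinal.{0}}
    (hle : ∀ l, h l ⊆ h' l) : Dset κ lam θ δ h' ⊆ Dset κ lam θ δ h :=
  fun _ ha => ⟨ha.1, fun l hd hG => (hle l).trans (ha.2 l hd hG)⟩

lemma Kcol_isIdeal (hκ : κ.IsRegular) (hθκ : θ ≤ κ) (hI : IsIdeal κ lam.ord N)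
    (hnor : N = nabla κ lam.ord θ δ N) :
    IsIdeal κ lam.ord (Kcol κ lam θ δ) := by
  constructor
  · exact fun B hB => hB.1
  · rintro B ⟨hBP, h, hh, hB⟩ C hCB
    exact ⟨hCB.trans hBP, h, hh, hCB.trans hB⟩
  · -- small unions
    rintro Y hY ⟨B₀, hB₀⟩ hYc
    have hc : ∀ B : ↥Y, ∃ h : List (Set Ordinal.{0}) → Set Ordinal.{0},
        (∀ l, h l ∈ PSet κ lam.ord) ∧
        B.1 ⊆ {a | a ∈ PSet κ lam.ord ∧ a ∩ Set.Iio θ.ord = ∅} ∪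
          (PSet κ lam.ord \ Dset κ lam θ δ h) := fun B => (hY B.2).2
    choose hB hBval hBsub using hc
    set hstar : List (Set Ordinal.{0}) → Set Ordinal.{0} :=
      fun l => ⋃ B : ↥Y, hB B l with hstardef
    have hstarval : ∀ l, hstar l ∈ PSet κ lam.ord := by
      intro l
      exact union_small hκ hYc (fun B => hBval B l)
    refine ⟨fun a ha => ?_, hstar, hstarval, ?_⟩
    · obtain ⟨B, hBY, haB⟩ := ha
      exact (hY hBY).1 haB
    · rintro a ⟨B, hBY, haB⟩
      rcases hBsub ⟨B, hBY⟩ haB with hfirst | ⟨haP, hnD⟩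
      · exact Or.inl hfirst
      · refine Or.inr ⟨haP, fun hD => hnD ⟨haP, fun l hd hG => ?_⟩⟩
        refine Set.Subset.trans ?_ (hD.2 l hd hG)
        exact Set.subset_iUnion (fun B' : ↥Y => hB B' l) ⟨B, hBY⟩
  · -- contains Ikl
    rintro B ⟨hBP, b, hb, hmiss⟩
    refine ⟨hBP, fun _ => b, fun _ => hb, fun a ha => Or.inr ⟨hBP ha, fun hD => ?_⟩⟩
    exact hmiss a ha (hD.2 [] dec_nil (fun e he => absurd he List.not_mem_nil))
  · -- proper
    rintro ⟨-, h, hh, hsub⟩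
    have h1 := firstclause_mem hκ hI hnor
    have h2 := Dset_compl_mem hκ hθκ hI hnor hh
    exact hI.univ_not_mem (subset_union2_mem hκ hI h1 h2 hsub)

lemma Kcol_isNormal (hκ : κ.IsRegular) (hθ2 : 2 ≤ θ) (hθκ : θ ≤ κ) :
    Kcol κ lam θ δ = nabla κ lam.ord θ δ (Kcol κ lam θ δ) := by
  apply Set.Subset.antisymm
  · -- K ⊆ nabla K
    intro B hB
    refine ⟨fun _ => B, fun _ _ => hB, fun a ha => ?_⟩
    have haP : a ∈ PSet κ lam.ord := hB.1 ha
    by_cases hemp : a ∩ Set.Iio θ.ord = ∅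
    · exact Or.inl ⟨haP, hemp⟩
    · refine Or.inr (Set.mem_biUnion (empty_mem_PSet (two_le_imp_pos hθ2)) ⟨ha, ?_⟩)
      refine ⟨Set.empty_subset _, ?_⟩
      have : (a ∩ Set.Iio θ.ord).Nonempty := Set.nonempty_iff_ne_empty.2 hemp
      have hpos : 0 < #↥(a ∩ Set.Iio θ.ord) := by
        haveI := Set.Nonempty.to_subtype this
        exact (Cardinal.mk_ne_zero _).bot_lt
      simpa using hpos
  · -- nabla K ⊆ K
    rintro B ⟨F, hF, hB⟩
    classical
    set HH : Set Ordinal.{0} → List (Set Ordinal.{0}) → Set Ordinal.{0} :=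
      fun e => if he : e ∈ PSet θ δ then Classical.choose (hF e he).2 else (fun _ => ∅)
      with hHHdef
    have hHHval : ∀ e l, HH e l ∈ PSet κ lam.ord := by
      intro e l
      by_cases he : e ∈ PSet θ δ
      · have : HH e = Classical.choose (hF e he).2 := by rw [hHHdef]; exact dif_pos he
        rw [this]
        exact (Classical.choose_spec (hF e he).2).1 l
      · have : HH e = fun _ => (∅ : Set Ordinal.{0}) := by rw [hHHdef]; exact dif_neg he
        rw [this]
        exact empty_mem_PSet (lt_of_lt_of_le Cardinal.aleph0_pos hκ.aleph0_le)
    have hHHsub : ∀ e (he : e ∈ PSet θ δ),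
        F e ⊆ {a | a ∈ PSet κ lam.ord ∧ a ∩ Set.Iio θ.ord = ∅} ∪
          (PSet κ lam.ord \ Dset κ lam θ δ (HH e)) := by
      intro e he
      have hspec := (Classical.choose_spec (hF e he).2).2
      have heq : HH e = Classical.choose (hF e he).2 := by rw [hHHdef]; exact dif_pos he
      rw [heq]
      exact hspec
    set hstar : List (Set Ordinal.{0}) → Set Ordinal.{0} := fun l =>
      ⋃ p : ULift.{1} (Fin l.length × Fin l.sublists.length),
        HH (l.get p.down.1) (l.sublists.get p.down.2) with hstardef
    have hstarval : ∀ l, hstar l ∈ PSet κ lam.ord := by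
      intro l
      apply union_small hκ
      · calc #(ULift.{1} (Fin l.length × Fin l.sublists.length)) < ℵ₀ :=
              Cardinal.lt_aleph0_of_finite _
          _ ≤ Cardinal.lift.{1} κ := Cardinal.aleph0_le_lift.2 hκ.aleph0_le
      · exact fun p => hHHval _ _
    have hBP : B ⊆ PSet κ lam.ord := by
      intro a ha
      rcases hB ha with h1 | h2
      · exact h1.1
      · simp only [Set.mem_iUnion] at h2
        obtain ⟨e, he, ha', -⟩ := h2
        exact (hF e he).1 ha'
    refine ⟨hBP, hstar, hstarval, ?_⟩
    intro a ha
    have haP : a ∈ PSet κ lam.ord := hBP ha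
    by_cases hemp : a ∩ Set.Iio θ.ord = ∅
    · exact Or.inl ⟨haP, hemp⟩
    rcases hB ha with h1 | h2
    · exact Or.inl h1
    simp only [Set.mem_iUnion] at h2
    obtain ⟨e, he, haF, hiP⟩ := h2
    rcases hHHsub e he haF with ⟨-, habs⟩ | ⟨-, hnD⟩
    · exact absurd habs hemp
    have hnD' : ∃ l, Dec l ∧ Guards θ δ a l ∧ ¬ HH e l ⊆ a := by
      by_contra hcon
      push_neg at hcon
      exact hnD ⟨haP, fun l hd hG => hcon l hd hG⟩
    obtain ⟨l, hdec, hG, hns⟩ := hnD'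
    obtain ⟨c, hc, hsub, hmem, hall⟩ := dec_insert e l hdec
    refine Or.inr ⟨haP, fun hD => ?_⟩
    have hGc : Guards θ δ a c := fun x hx =>
      (hall x hx).elim (fun hxl => hG x hxl) (fun hxe => hxe ▸ hiP)
    have hsubs : hstar c ⊆ a := hD.2 c hc hGc
    obtain ⟨i, hi⟩ := List.mem_iff_get.1 hmem
    have hls : l ∈ c.sublists := List.mem_sublists.2 hsub
    obtain ⟨j, hj⟩ := List.mem_iff_get.1 hls
    have hkey : HH e l ⊆ hstar c := by
      rw [← hi, ← hj]
      exact Set.subset_iUnion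
        (fun p : ULift.{1} (Fin c.length × Fin c.sublists.length) =>
          HH (c.get p.down.1) (c.sublists.get p.down.2)) (ULift.up (i, j))
    exact hns (hkey.trans hsubs)

lemma Kcol_isNormalIdeal (hκ : κ.IsRegular) (hθ2 : 2 ≤ θ) (hθκ : θ ≤ κ)
    (hI : IsIdeal κ lam.ord N) (hnor : N = nabla κ lam.ord θ δ N) :
    IsNormalIdeal κ lam.ord θ δ (Kcol κ lam θ δ) :=
  ⟨Kcol_isIdeal hκ hθκ hI hnor, Kcol_isNormal hκ hθ2 hθκ⟩

end K
-- AUX chunk 6 : direction 1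

section Dir1

variable {κ lam θ : Cardinal.{0}} {δ : Ordinal.{0}} {N : Set (Set (Set Ordinal.{0}))}

/-- every element of `P_θ̄(δ)` sits inside some `b ∈ P_κ(λ)` forcing the guard `inP`. -/
lemma hat_set (hκ : κ.IsRegular) (hθκ : θ ≤ κ) (hkl : κ ≤ lam) (hdl : δ ≤ lam.ord)
    {e : Set Ordinal.{0}} (he : e ∈ PSet (thetaBar κ θ) δ) :
    ∃ b ∈ PSet κ lam.ord, e ⊆ b ∧ ∀ a : Set Ordinal.{0}, b ⊆ a → inP θ δ a e := by
  obtain ⟨c, hclt, hlift⟩ := Cardinal.lt_lift_iff.1 he.2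
  set w : Set Ordinal.{0} := Set.Iio ((Order.succ c).ord) with hwdef
  have hwθ : w ⊆ Set.Iio θ.ord :=
    Set.Iio_subset_Iio (Cardinal.ord_le_ord.2 (tb_succ_le hκ hθκ hclt))
  have hwmk : #↥w = Cardinal.lift.{1} (Order.succ c) := mk_Iio_ord _
  refine ⟨e ∪ w, ⟨?_, ?_⟩, Set.subset_union_left, ?_⟩
  · apply Set.union_subset
    · exact he.1.trans (Set.Iio_subset_Iio hdl)
    · exact hwθ.trans (Set.Iio_subset_Iio (Cardinal.ord_le_ord.2 (hθκ.trans hkl)))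
  · calc #↥(e ∪ w) ≤ #↥e + #↥w := Cardinal.mk_union_le e w
      _ = Cardinal.lift.{1} (c + Order.succ c) := by rw [Cardinal.lift_add, hlift, hwmk]
      _ < Cardinal.lift.{1} κ := by
        apply Cardinal.lift_lt.2
        apply Cardinal.add_lt_of_lt hκ.aleph0_le
        · exact (Order.le_succ c).trans_lt (tb_succ_lt hκ hθκ hclt)
        · exact tb_succ_lt hκ hθκ hclt
  · intro a hba
    constructor
    · exact Set.subset_inter ((Set.subset_union_left).trans hba) he.1
    · have hwa : w ⊆ a ∩ Set.Iio θ.ord :=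
        Set.subset_inter ((Set.subset_union_right).trans hba) hwθ
      calc #↥e = Cardinal.lift.{1} c := hlift.symm
        _ < Cardinal.lift.{1} (Order.succ c) :=
            Cardinal.lift_lt.2 (Order.lt_succ_of_not_isMax (not_isMax c))
        _ = #↥w := hwmk.symm
        _ ≤ #↥(a ∩ Set.Iio θ.ord) := Cardinal.mk_le_mk_of_subset hwa

lemma dir1 (hκ : κ.IsRegular) (hkl : κ ≤ lam) (hθκ : θ ≤ κ) (hdl : δ ≤ lam.ord)
    (hI : IsIdeal κ lam.ord N) (hnor : N = nabla κ lam.ord θ δ N)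
    {A : Set (Set Ordinal.{0})} (hA : A ∈ plus κ lam.ord N) :
    dNum κ lam.ord (#↥(PSet (thetaBar κ θ) δ)) ≤ cofIdeal (restrict κ lam.ord N A) := by
  classical
  apply le_csInf
  · exact ⟨#↥(restrict κ lam.ord N A), restrict κ lam.ord N A, Set.Subset.refl _, rfl,
      fun B hB => ⟨B, hB, Set.Subset.refl _⟩⟩
  rintro c ⟨S, hSsub, hcard, hcov⟩
  -- the index equivalence
  have hmk : #((#↥(PSet (thetaBar κ θ) δ)).ord.ToType) = #(↥(PSet (thetaBar κ θ) δ)) := by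
    rw [Cardinal.mk_toType, Cardinal.card_ord]
  obtain ⟨β⟩ := Cardinal.eq.1 hmk
  -- the guard-forcing sets
  have hbex : ∀ i, ∃ b ∈ PSet κ lam.ord, (β i).1 ⊆ b ∧
      ∀ a : Set Ordinal.{0}, b ⊆ a → inP θ δ a (β i).1 :=
    fun i => hat_set hκ hθκ hkl hdl (β i).2
  choose b hbP hbe hbinP using hbex
  -- the choice of elements of A
  have hPex : ∀ (C : ↥S) (i : (#↥(PSet (thetaBar κ θ) δ)).ord.ToType),
      ∃ a, a ∈ A ∧ a ∉ C.1 ∧ b i ⊆ a := by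
    intro C i
    by_contra hcon
    push_neg at hcon
    have hsub : A \ C.1 ⊆ {x | x ∈ PSet κ lam.ord ∧ ¬ b i ⊆ x} := by
      rintro a ⟨haA, haC⟩
      exact ⟨hA.1 haA, hcon a haA haC⟩
    have hN1 : A \ C.1 ∈ N := hI.subset_mem _ (compl_hat_mem hI (hbP i)) _ hsub
    have hN2 : C.1 ∩ A ∈ N := (hSsub C.2).2
    have : A ∈ N := by
      apply subset_union2_mem hκ hI hN2 hN1
      intro a haA
      by_cases hc : a ∈ C.1
      · exact Or.inl ⟨hc, haA⟩
      · exact Or.inr ⟨haA, hc⟩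
    exact hA.2 this
  choose P hPA hPC hPb using hPex
  -- P is a dominating family
  apply le_trans _ (le_of_eq hcard)
  apply le_trans (csInf_le' _) (Cardinal.mk_range_le (f := P))
  refine ⟨Set.range P, rfl, ?_, ?_⟩
  · rintro f ⟨C, rfl⟩ i
    exact hA.1 (hPA C i)
  · intro g hg
    set Dg : Set (Set Ordinal.{0}) :=
      {a | a ∈ PSet κ lam.ord ∧ ∀ i, inP θ δ a (β i).1 → g i ⊆ a} with hDgdef
    have hDgc : PSet κ lam.ord \ Dg ∈ N := by
      apply mem_N_of_nabla (N := N) hnor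
        (fun e => {a | a ∈ PSet κ lam.ord ∧ ∃ i, (β i).1 = e ∧ ¬ g i ⊆ a})
      · intro e _
        by_cases hex : ∃ i, (β i).1 = e
        · obtain ⟨i, hie⟩ := hex
          apply hI.subset_mem _ (compl_hat_mem hI (hg i))
          rintro a ⟨haP, i', hi'e, hng⟩
          have : i' = i := by
            have : β i' = β i := Subtype.val_injective (hi'e.trans hie.symm)
            exact β.injective this
          exact ⟨haP, this ▸ hng⟩
        · have : {a | a ∈ PSet κ lam.ord ∧ ∃ i, (β i).1 = e ∧ ¬ g i ⊆ a} = ∅ := by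
            ext a
            simp only [Set.mem_setOf_eq, Set.mem_empty_iff_false, iff_false, not_and]
            rintro - ⟨i, hie, -⟩
            exact hex ⟨i, hie⟩
          rw [this]
          exact emptyset_mem hκ hI
      · rintro a ⟨haP, hnd⟩
        right
        simp only [hDgdef, Set.mem_setOf_eq, not_and, not_forall] at hnd
        obtain ⟨i, hiP, hng⟩ := hnd haP
        have hei : (β i).1 ∈ PSet θ δ := PSet_mono (tb_le hκ hθκ) (β i).2
        exact Set.mem_biUnion hei ⟨⟨haP, i, rfl, hng⟩, hiP⟩
    have hB' : A \ Dg ∈ restrict κ lam.ord N A := by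
      refine ⟨fun a ha => hA.1 ha.1, ?_⟩
      apply hI.subset_mem _ hDgc
      rintro a ⟨⟨haA, hnd⟩, -⟩
      exact ⟨hA.1 haA, hnd⟩
    obtain ⟨C, hCS, hsubC⟩ := hcov _ hB'
    refine ⟨P ⟨C, hCS⟩, Set.mem_range_self _, ?_⟩
    intro i
    have hfa := hPA ⟨C, hCS⟩ i
    have hfC := hPC ⟨C, hCS⟩ i
    have hfb := hPb ⟨C, hCS⟩ i
    have hfD : P ⟨C, hCS⟩ i ∈ Dg := by
      by_contra hnD
      exact hfC (hsubC ⟨hfa, hnD⟩)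
    exact hfD.2 i (hbinP i _ hfb)

end Dir1
-- AUX chunk 7 : dominating families for list-indexed functions

def Tlists (κ θ : Cardinal.{0}) (δ : Ordinal.{0}) : Set (List (Set Ordinal.{0})) :=
  {l | Dec l ∧ ∀ e ∈ l, e ∈ PSet (thetaBar κ θ) δ}

section Dir2

variable {κ lam θ : Cardinal.{0}} {δ : Ordinal.{0}} {N : Set (Set (Set Ordinal.{0}))}

lemma pmap_val (S : Set (Set Ordinal.{0})) :
    ∀ (l : List (Set Ordinal.{0})) (H : ∀ e ∈ l, e ∈ S),
      (List.pmap (fun e (he : e ∈ S) => (⟨e, he⟩ : ↥S)) l H).map Subtype.val = l := by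
  intro l
  induction l with
  | nil => intro H; simp
  | cons x xs ih => intro H; simp [ih]

lemma dnum_nonempty (κ lam : Cardinal.{0}) (μ : Cardinal.{1}) :
    ∃ F : Set (μ.ord.ToType → Set Ordinal.{0}),
      #↥F = dNum κ lam.ord μ ∧ (∀ f ∈ F, ∀ i, f i ∈ PSet κ lam.ord) ∧
      ∀ g : μ.ord.ToType → Set Ordinal.{0}, (∀ i, g i ∈ PSet κ lam.ord) →
        ∃ f ∈ F, ∀ i, g i ⊆ f i := by
  have hne : {c | ∃ F : Set (μ.ord.ToType → Set Ordinal.{0}),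
      #↥F = c ∧ (∀ f ∈ F, ∀ i, f i ∈ PSet κ lam.ord) ∧
      ∀ g : μ.ord.ToType → Set Ordinal.{0}, (∀ i, g i ∈ PSet κ lam.ord) →
        ∃ f ∈ F, ∀ i, g i ⊆ f i}.Nonempty := by
    refine ⟨_, {f | ∀ i, f i ∈ PSet κ lam.ord}, rfl, fun f hf => hf, ?_⟩
    exact fun g hg => ⟨g, hg, fun i => Set.Subset.refl _⟩
  obtain ⟨F, hF⟩ := csInf_mem hne
  exact ⟨F, hF⟩

lemma list_dom (hκ : κ.IsRegular) (hθ2 : 2 ≤ θ) (hθκ : θ ≤ κ) :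
    ∃ H : Set (List (Set Ordinal.{0}) → Set Ordinal.{0}),
      #↥H ≤ dNum κ lam.ord (#↥(PSet (thetaBar κ θ) δ)) ∧
      (∀ h' ∈ H, ∀ l, h' l ∈ PSet κ lam.ord) ∧
      ∀ h : List (Set Ordinal.{0}) → Set Ordinal.{0}, (∀ l, h l ∈ PSet κ lam.ord) →
        ∃ h' ∈ H, ∀ l ∈ Tlists κ θ δ, h l ⊆ h' l := by
  classical
  obtain ⟨F₀, hF₀card, hF₀val, hF₀dom⟩ :=
    dnum_nonempty κ lam (#↥(PSet (thetaBar κ θ) δ))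
  have hmk : #((#↥(PSet (thetaBar κ θ) δ)).ord.ToType) = #(↥(PSet (thetaBar κ θ) δ)) := by
    rw [Cardinal.mk_toType, Cardinal.card_ord]
  have hempel : (∅ : Set Ordinal.{0}) ∈ PSet (thetaBar κ θ) δ :=
    empty_mem_PSet (tb_pos hκ hθ2 hθκ)
  have hidxne : Nonempty ((#↥(PSet (thetaBar κ θ) δ)).ord.ToType) := by
    rw [Ordinal.toType_nonempty_iff_ne_zero, ne_eq, Cardinal.ord_eq_zero]
    exact fun h0 => absurd h0
      ((Cardinal.mk_ne_zero_iff (α := ↥(PSet (thetaBar κ θ) δ))).2 ⟨⟨∅, hempel⟩⟩)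
  by_cases hinf : ℵ₀ ≤ #↥(PSet (thetaBar κ θ) δ)
  · -- infinite index case
    haveI : Infinite ↥(PSet (thetaBar κ θ) δ) := Cardinal.infinite_iff.2 hinf
    have hTle : #↥(Tlists κ θ δ) ≤ #↥(PSet (thetaBar κ θ) δ) := by
      have hinj : Function.Injective
          (fun l : ↥(Tlists κ θ δ) =>
            List.pmap (fun e (he : e ∈ PSet (thetaBar κ θ) δ) => (⟨e, he⟩ : ↥(PSet (thetaBar κ θ) δ))) l.1 l.2.2) := by
        intro l₁ l₂ hl
        apply Subtype.ext
        have := congrArg (List.map (Subtype.val)) hl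
        rwa [pmap_val, pmap_val] at this
      calc #↥(Tlists κ θ δ) ≤ #(List ↥(PSet (thetaBar κ θ) δ)) :=
            Cardinal.mk_le_of_injective hinj
        _ = #↥(PSet (thetaBar κ θ) δ) := Cardinal.mk_list_eq_mk _
    obtain ⟨j⟩ := Cardinal.le_def _ _ |>.1 (hTle.trans hmk.symm.le)
    set H : Set (List (Set Ordinal.{0}) → Set Ordinal.{0}) :=
      (fun f => fun l => if hl : l ∈ Tlists κ θ δ then f (j ⟨l, hl⟩) else ∅) '' F₀
      with hHdef
    refine ⟨H, ?_, ?_, ?_⟩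
    · calc #↥H ≤ #↥F₀ := Cardinal.mk_image_le
        _ = _ := hF₀card
    · rintro h' ⟨f, hfF, rfl⟩ l
      by_cases hl : l ∈ Tlists κ θ δ
      · simpa [dif_pos hl] using hF₀val f hfF (j ⟨l, hl⟩)
      · simpa [dif_neg hl] using empty_mem_PSet (lt_of_lt_of_le Cardinal.aleph0_pos hκ.aleph0_le)
    · intro h hh
      set g : (#↥(PSet (thetaBar κ θ) δ)).ord.ToType → Set Ordinal.{0} :=
        Function.extend (fun t : ↥(Tlists κ θ δ) => j t) (fun t => h t.1) (fun _ => ∅)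
        with hgdef
      have hg : ∀ i, g i ∈ PSet κ lam.ord := by
        intro i
        rw [hgdef, Function.extend_def]
        split
        · exact hh _
        · exact empty_mem_PSet (lt_of_lt_of_le Cardinal.aleph0_pos hκ.aleph0_le)
      obtain ⟨f, hfF, hdom⟩ := hF₀dom g hg
      refine ⟨_, ⟨f, hfF, rfl⟩, ?_⟩
      intro l hl
      have h1 : g (j ⟨l, hl⟩) = h l := j.injective.extend_apply _ _ _
      have h2 := hdom (j ⟨l, hl⟩)
      rw [h1] at h2
      simpa [dif_pos hl] using h2
  · -- finite index case
    haveI hfinX : Finite ↥(PSet (thetaBar κ θ) δ) := by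
      rw [← Cardinal.lt_aleph0_iff_finite]
      exact not_le.1 hinf
    haveI : Fintype ↥(PSet (thetaBar κ θ) δ) := Fintype.ofFinite _
    haveI hTfin : Finite ↥(Tlists κ θ δ) := by
      have hinj : Function.Injective
          (fun l : ↥(Tlists κ θ δ) =>
            (⟨List.pmap (fun e (he : e ∈ PSet (thetaBar κ θ) δ) => (⟨e, he⟩ : ↥(PSet (thetaBar κ θ) δ))) l.1 l.2.2,
              by
                apply List.Nodup.pmap
                · intro a ha b hb hab
                  exact congrArg Subtype.val hab
                · exact dec_nodup l.2.1⟩ :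
              {l' : List ↥(PSet (thetaBar κ θ) δ) // l'.Nodup})) := by
        intro l₁ l₂ hl
        apply Subtype.ext
        have := congrArg (fun x : {l' : List ↥(PSet (thetaBar κ θ) δ) // l'.Nodup} =>
          List.map (Subtype.val) x.1) hl
        simp only at this
        rwa [pmap_val, pmap_val] at this
      exact Finite.of_injective _ hinj
    obtain ⟨i₀⟩ := hidxne
    set H : Set (List (Set Ordinal.{0}) → Set Ordinal.{0}) :=
      (fun f => fun _ : List (Set Ordinal.{0}) => f i₀) '' F₀ with hHdef
    refine ⟨H, ?_, ?_, ?_⟩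
    · calc #↥H ≤ #↥F₀ := Cardinal.mk_image_le
        _ = _ := hF₀card
    · rintro h' ⟨f, hfF, rfl⟩ l
      exact hF₀val f hfF i₀
    · intro h hh
      set gU : Set Ordinal.{0} := ⋃ t : ↥(Tlists κ θ δ), h t.1 with hgUdef
      have hgU : gU ∈ PSet κ lam.ord := by
        apply union_small hκ
        · calc #↥(Tlists κ θ δ) < ℵ₀ := Cardinal.lt_aleph0_of_finite _
            _ ≤ Cardinal.lift.{1} κ := Cardinal.aleph0_le_lift.2 hκ.aleph0_le
        · exact fun t => hh t.1
      obtain ⟨f, hfF, hdom⟩ := hF₀dom (fun _ => gU) (fun _ => hgU)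
      refine ⟨_, ⟨f, hfF, rfl⟩, ?_⟩
      intro l hl
      calc h l ⊆ gU := Set.subset_iUnion (fun t : ↥(Tlists κ θ δ) => h t.1) ⟨l, hl⟩
        _ ⊆ f i₀ := hdom i₀

end Dir2
-- AUX chunk 8 : direction 2 and the main theorem ingredients

section Final

variable {κ lam θ : Cardinal.{0}} {δ : Ordinal.{0}} {N : Set (Set (Set Ordinal.{0}))}

lemma dir2 (hκ : κ.IsRegular) (hθ2 : 2 ≤ θ) (hθκ : θ ≤ κ)
    (hI : IsIdeal κ lam.ord N) (hnor : N = nabla κ lam.ord θ δ N)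
    (hleast : ∀ J, IsNormalIdeal κ lam.ord θ δ J → N ⊆ J)
    {A : Set (Set Ordinal.{0})} (hA : A ∈ plus κ lam.ord N) :
    cofIdeal (restrict κ lam.ord N A) ≤ dNum κ lam.ord (#↥(PSet (thetaBar κ θ) δ)) := by
  classical
  have hNK : N ⊆ Kcol κ lam θ δ :=
    hleast _ (Kcol_isNormalIdeal hκ hθ2 hθκ hI hnor)
  obtain ⟨H, hHcard, hHval, hHdom⟩ := list_dom (lam := lam) (δ := δ) hκ hθ2 hθκ
  set G : (List (Set Ordinal.{0}) → Set Ordinal.{0}) → Set (Set Ordinal.{0}) :=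
    fun h' => (PSet κ lam.ord \ A) ∪
      ({a | a ∈ PSet κ lam.ord ∧ a ∩ Set.Iio θ.ord = ∅} ∪
        (PSet κ lam.ord \ Dset κ lam θ δ h')) with hGdef
  have hSsub : ∀ h' ∈ H, G h' ∈ restrict κ lam.ord N A := by
    intro h' hh'
    constructor
    · intro a ha
      rcases ha with h1 | h2 | h3
      · exact h1.1
      · exact h2.1
      · exact h3.1
    · apply hI.subset_mem _
        (union2_mem hκ hI (firstclause_mem hκ hI hnor)
          (Dset_compl_mem hκ hθκ hI hnor (hHval h' hh')))
      rintro a ⟨haG, haA⟩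
      rcases haG with h1 | h2 | h3
      · exact absurd haA h1.2
      · exact Or.inl h2
      · exact Or.inr h3
  have hcov : ∀ B ∈ restrict κ lam.ord N A, ∃ C ∈ G '' H, B ⊆ C := by
    intro B hB
    have hBA : B ∩ A ∈ Kcol κ lam θ δ := hNK hB.2
    obtain ⟨-, h, hh, hsub⟩ := hBA
    obtain ⟨h', hh'H, hdom⟩ := hHdom h hh
    have hDsub : Dset κ lam θ δ h' ⊆ Dset κ lam θ δ h := by
      rintro a ⟨haP, hcl⟩
      refine ⟨haP, fun l hd hG' => ?_⟩
      have hlT : l ∈ Tlists κ θ δ :=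
        ⟨hd, fun e he => inP_mem_tb hκ hθκ haP (hG' e he)⟩
      exact (hdom l hlT).trans (hcl l hd hG')
    refine ⟨G h', Set.mem_image_of_mem _ hh'H, ?_⟩
    intro a haB
    have haP : a ∈ PSet κ lam.ord := hB.1 haB
    by_cases haA : a ∈ A
    · rcases hsub ⟨haB, haA⟩ with h1 | h2
      · exact Or.inr (Or.inl h1)
      · refine Or.inr (Or.inr ⟨haP, fun hD' => h2.2 (hDsub hD')⟩)
    · exact Or.inl ⟨haP, haA⟩
  calc cofIdeal (restrict κ lam.ord N A) ≤ #↥(G '' H) := by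
        apply csInf_le'
        exact ⟨G '' H, fun C hC => by
          obtain ⟨h', hh', rfl⟩ := hC
          exact hSsub h' hh', rfl, hcov⟩
    _ ≤ #↥H := Cardinal.mk_image_le
    _ ≤ _ := hHcard

end Final

/-- Assume there exists a `[δ]^{<θ}`-normal ideal on `P_κ(λ)`. Then for every
`A ∈ (NS^{[δ]^{<θ}}_{κ,λ})⁺`, `cof(NS^{[δ]^{<θ}}_{κ,λ} | A) = 𝔡^{|P_θ̄(δ)|}_{κ,λ}`. -/
theorem stmt0 (κ lam θ : Cardinal.{0}) (δ : Ordinal.{0})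
    (hκ : κ.IsRegular) (hkl : κ ≤ lam) (hθ2 : 2 ≤ θ) (hθκ : θ ≤ κ)
    (hδ1 : 1 ≤ δ) (hdl : δ ≤ lam.ord)
    (hex : ∃ J, IsNormalIdeal κ lam.ord θ δ J) :
    ∀ N, IsLeastNormalIdeal κ lam.ord θ δ N →
      ∀ A ∈ plus κ lam.ord N,
        cofIdeal (restrict κ lam.ord N A) = dNum κ lam.ord (#↥(PSet (thetaBar κ θ) δ)) := by
  intro N hN A hA
  obtain ⟨⟨hI, hnor⟩, hleast⟩ := hN
  exact le_antisymm (dir2 hκ hθ2 hθκ hI hnor hleast hA)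
    (dir1 hκ hkl hθκ hdl hI hnor hA)

end PklNormal
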